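/- Let A and C be unital C*-algebras, let ι₁, ι₂ : A → C be unital *-homomorphisms whose ranges commute elementwise (ι₁(a) ι₂(b) = ι₂(b) ι₁(a) for all a, b ∈ A), and let Λ : C → A be a unital completely positive map with Λ ∘ ι₁ = id_A and Λ ∘ ι₂ = id_A. Then A is commutative, and moreover Λ(ι₁(a) ι₂(b)) = a b for all a, b ∈ A. -/

import Mathlib

/-- A linear map between C*-algebras is completely positive if for every `n` and all tuples
`a : Fin n → A`, `b : Fin n → B`, the element `∑ i, ∑ j, (b i)* Λ((a i)* a j) (b j)` is
positive. -/
def IsCompletelyPositive {A B : Type*} [CStarAlgebra A] [CStarAlgebra B]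
    [PartialOrder B] [StarOrderedRing B] (Λ : A →ₗ[ℂ] B) : Prop :=
  ∀ (n : ℕ) (a : Fin n → A) (b : Fin n → B),
    0 ≤ ∑ i : Fin n, ∑ j : Fin n, star (b i) * Λ (star (a i) * a j) * b j

/-- No-copying implies commutativity: if `ι₁, ι₂ : A → C` are unital *-homomorphisms with
elementwise commuting ranges and `Λ : C → A` is a unital completely positive map with
`Λ ∘ ι₁ = id` and `Λ ∘ ι₂ = id`, then `A` is commutative and `Λ(ι₁(a) ι₂(b)) = a b`. -/
theorem broadcasting_implies_commutative {A C : Type*} [CStarAlgebra A] [CStarAlgebra C]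
    [PartialOrder A] [StarOrderedRing A] [PartialOrder C] [StarOrderedRing C]
    (ι₁ ι₂ : A →⋆ₐ[ℂ] C)
    (hcomm : ∀ a b : A, ι₁ a * ι₂ b = ι₂ b * ι₁ a)
    (Λ : C →ₗ[ℂ] A) (hunital : Λ 1 = 1) (hcp : IsCompletelyPositive Λ)
    (h₁ : ∀ a : A, Λ (ι₁ a) = a) (h₂ : ∀ a : A, Λ (ι₂ a) = a) :
    (∀ a b : A, a * b = b * a) ∧ (∀ a b : A, Λ (ι₁ a * ι₂ b) = a * b) := by
  -- Step 0: a positive element squeezed by all real multiples of `Z` forces `Z = 0`.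
  have zero_of_smul : ∀ (E Z : A), (∀ r : ℝ, 0 ≤ (r:ℂ) • Z + E) → Z = 0 := by
    intro E Z hZ
    have hb : ∀ r : ℝ, 0 < r → r * ‖Z‖ ≤ 3 * ‖E‖ := by
      intro r hr
      have hp1 := hZ r
      have hp2 := hZ (-r)
      have hle : (r:ℂ) • Z + E ≤ E + E := by
        have : (r:ℂ) • Z ≤ E := by
          rw [← sub_nonneg]
          convert hp2 using 1
          push_cast
          rw [neg_smul]
          abel
        exact add_le_add_left this E
      have hnorm : ‖(r:ℂ) • Z + E‖ ≤ ‖E + E‖ :=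
        CStarAlgebra.norm_le_norm_of_nonneg_of_le hp1 hle
      calc r * ‖Z‖ = ‖(r:ℂ) • Z‖ := by
            rw [norm_smul, Complex.norm_real, Real.norm_eq_abs, abs_of_pos hr]
        _ = ‖((r:ℂ) • Z + E) - E‖ := by rw [add_sub_cancel_right]
        _ ≤ ‖(r:ℂ) • Z + E‖ + ‖E‖ := norm_sub_le _ _
        _ ≤ ‖E + E‖ + ‖E‖ := by linarith
        _ ≤ 3 * ‖E‖ := by
            have := norm_add_le E E
            linarith
    have hnz : ‖Z‖ ≤ 0 := by
      by_contra h
      push_neg at h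
      have hE : 0 ≤ ‖E‖ := norm_nonneg E
      have := hb ((3 * ‖E‖ + 1) / ‖Z‖) (by positivity)
      rw [div_mul_cancel₀ _ (ne_of_gt h)] at this
      linarith
    simpa using norm_le_zero_iff.mp hnz
  -- Step 1: the generalized Schwarz inequality derived from 3-positivity.
  have key : ∀ (c d : C) (t s : ℂ),
      0 ≤ (starRingEnd ℂ t * t) • (Λ (star c * c) - Λ (star c) * Λ c)
        + (starRingEnd ℂ t * s) • (Λ (star c * d) - Λ (star c) * Λ d)
        + (starRingEnd ℂ s * t) • (Λ (star d * c) - Λ (star d) * Λ c)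
        + (starRingEnd ℂ s * s) • (Λ (star d * d) - Λ (star d) * Λ d) := by
    intro c d t s
    have h := hcp 3 ![1, c, d] ![-(t • Λ c + s • Λ d), t • (1:A), s • (1:A)]
    simp only [Fin.sum_univ_three, Matrix.cons_val_zero, Matrix.cons_val_one, Matrix.head_cons,
      Matrix.cons_val_two, Matrix.tail_cons, star_one, one_mul, mul_one, star_neg, star_add,
      star_smul, map_add, map_smul, hunital, Matrix.head_fin_const] at h
    refine h.trans_eq ?_
    simp only [mul_add, add_mul, mul_neg, neg_mul, smul_mul_assoc, mul_smul_comm, smul_smul,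
      map_add, map_smul, smul_sub, one_mul, mul_one, smul_add, neg_add, starRingEnd_apply]
    module
  -- Step 2: the multiplicative domain argument.
  have mult : ∀ (ι : A →⋆ₐ[ℂ] C), (∀ a : A, Λ (ι a) = a) →
      ∀ (a : A) (d : C), Λ (ι a * d) = a * Λ d := by
    intro ι hι a d
    set c := ι (star a) with hc
    have hsc : star c = ι a := by rw [hc, ← map_star, star_star]
    have hcc : Λ (star c * c) - Λ (star c) * Λ c = 0 := by
      rw [hsc, hc, ← map_mul, hι, hι, hι, sub_self]
    set X := Λ (star c * d) - Λ (star c) * Λ d with hX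
    set Y := Λ (star d * c) - Λ (star d) * Λ c with hY
    set E := Λ (star d * d) - Λ (star d) * Λ d with hE
    have k1 : ∀ r : ℝ, 0 ≤ (r:ℂ) • (X + Y) + E := by
      intro r
      have h := key c d (r:ℂ) 1
      rw [hcc] at h
      simp only [map_one, one_mul, mul_one, Complex.conj_ofReal, smul_zero, zero_add, one_smul,
        smul_add] at h ⊢
      convert h using 1
    have k2 : ∀ r : ℝ, 0 ≤ (r:ℂ) • (Complex.I • Y - Complex.I • X) + E := by
      intro r
      have h := key c d ((r:ℂ) * Complex.I) 1
      rw [hcc] at h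
      simp only [map_one, map_mul, one_mul, mul_one, Complex.conj_ofReal, Complex.conj_I,
        smul_zero, zero_add, one_smul] at h
      convert h using 1
      rw [hX, hY, hE]
      module
    have hXY : X + Y = 0 := zero_of_smul E _ k1
    have hYX : Complex.I • Y - Complex.I • X = 0 := zero_of_smul E _ k2
    have hYeqX : Y = X := by
      have h' : Complex.I • Y = Complex.I • X := sub_eq_zero.mp hYX
      exact smul_right_injective A Complex.I_ne_zero h'
    have hX0 : X = 0 := by
      rw [hYeqX] at hXY
      have h2 : (2:ℂ) • X = 0 := by rw [two_smul]; exact hXY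
      rcases smul_eq_zero.mp h2 with h | h
      · exact absurd h two_ne_zero
      · exact h
    have hXeq : Λ (star c * d) = Λ (star c) * Λ d := sub_eq_zero.mp hX0
    rw [← hsc, hXeq, hsc, hι]
  have m1 := mult ι₁ h₁
  have m2 := mult ι₂ h₂
  refine ⟨?_, ?_⟩
  · intro a b
    have e1 : Λ (ι₁ a * ι₂ b) = a * b := by rw [m1 a (ι₂ b), h₂]
    have e2 : Λ (ι₂ b * ι₁ a) = b * a := by rw [m2 b (ι₁ a), h₁]
    rw [← e1, ← e2, hcomm]
  · intro a b
    rw [m1 a (ι₂ b), h₂]
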